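/- Let Y be a nonempty compact subset of ℂ² such that the uniform algebra P(Y) has dense invertibles. Then for every point z in the polynomial hull Ŷ and every polynomial function p in the two complex coordinates with p(z) = 0, there exists y ∈ Y with p(y) = 0. (That is, the polynomial hull of Y coincides with its rational hull.) -/

import Mathlib

open BoundedContinuousFunction Set

noncomputable def pev (q : MvPolynomial (Fin 2) ℂ) (z : ℂ × ℂ) : ℂ :=
  MvPolynomial.eval ![z.1, z.2] q

def bidisk : Set (ℂ × ℂ) := {z : ℂ × ℂ | ‖z.1‖ ≤ 1 ∧ ‖z.2‖ ≤ 1}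

def polyHull (Y : Set (ℂ × ℂ)) : Set (ℂ × ℂ) :=
  {z : ℂ × ℂ | ∀ (q : MvPolynomial (Fin 2) ℂ) (M : ℝ),
    (∀ y ∈ Y, ‖pev q y‖ ≤ M) → ‖pev q z‖ ≤ M}

/-- The subalgebra of `Y →ᵇ ℂ` consisting of restrictions to `Y` of polynomial
functions in the two complex coordinates. -/
noncomputable def polySub (Y : Set (ℂ × ℂ)) : Subalgebra ℂ (Y →ᵇ ℂ) where
  carrier := {f : Y →ᵇ ℂ | ∃ q : MvPolynomial (Fin 2) ℂ, ∀ y : Y, f y = pev q ↑y}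
  mul_mem' := by
    rintro f g ⟨q, hq⟩ ⟨r, hr⟩
    exact ⟨q * r, fun y => by simp [pev, hq y, hr y]⟩
  one_mem' := ⟨1, fun y => by simp [pev]⟩
  add_mem' := by
    rintro f g ⟨q, hq⟩ ⟨r, hr⟩
    exact ⟨q + r, fun y => by simp [pev, hq y, hr y]⟩
  zero_mem' := ⟨0, fun y => by simp [pev]⟩
  algebraMap_mem' := fun c => ⟨MvPolynomial.C c, fun y => by simp [pev]⟩

/-- `P(Y)`: the uniform closure of the polynomial restrictions, as a Banach algebra
(a closed subalgebra of the bounded continuous functions on `Y`). -/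
noncomputable def PY (Y : Set (ℂ × ℂ)) : Subalgebra ℂ (Y →ᵇ ℂ) :=
  (polySub Y).topologicalClosure

/-- Let `Y` be a nonempty compact subset of `ℂ²` such that `P(Y)` has dense invertibles.
Then for every point `z` of the polynomial hull of `Y` and every polynomial `p` with
`p z = 0`, there exists `y ∈ Y` with `p y = 0`. -/
theorem stmt9 (Y : Set (ℂ × ℂ)) (hne : Y.Nonempty) (hcpt : IsCompact Y)
    (hinv : Dense {f : PY Y | IsUnit f}) :
    ∀ z ∈ polyHull Y, ∀ q : MvPolynomial (Fin 2) ℂ,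
      pev q z = 0 → ∃ y ∈ Y, pev q y = 0 := by
  intro z hz q hq
  by_contra hcon
  push_neg at hcon
  have hcont : Continuous (pev q) := by
    have h : Continuous fun v : Fin 2 → ℂ => MvPolynomial.eval v q :=
      MvPolynomial.continuous_eval q
    have h2 : Continuous fun w : ℂ × ℂ => (![w.1, w.2] : Fin 2 → ℂ) := by
      apply continuous_pi; intro i; fin_cases i <;> simp <;> fun_prop
    exact h.comp h2
  haveI : CompactSpace ↥Y := isCompact_iff_compactSpace.mp hcpt
  -- the restriction of `pev q` to `Y` as a bounded continuous function
  set f : Y →ᵇ ℂ :=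
    BoundedContinuousFunction.mkOfCompact ⟨fun y => pev q ↑y, hcont.comp continuous_subtype_val⟩
    with hfdef
  have hfy : ∀ y : Y, f y = pev q ↑y := fun y => rfl
  -- the minimum of ‖pev q‖ on Y
  obtain ⟨y0, hy0Y, hy0min⟩ :=
    hcpt.exists_isMinOn hne ((continuous_norm.comp hcont).continuousOn)
  set δ : ℝ := ‖pev q y0‖ with hδdef
  have hδpos : 0 < δ := norm_pos_iff.mpr (hcon y0 hy0Y)
  have hδle : ∀ y ∈ Y, δ ≤ ‖pev q y‖ := fun y hy => hy0min hy
  have hfmem : f ∈ PY Y := (polySub Y).le_topologicalClosure ⟨q, fun y => rfl⟩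
  set fA : PY Y := ⟨f, hfmem⟩ with hfAdef
  -- a unit `g` within `δ/3` of `fA`
  obtain ⟨g, hgball, hgu⟩ := Metric.dense_iff.mp hinv fA (δ/3) (by positivity)
  have hdist : ‖(g : Y →ᵇ ℂ) - f‖ < δ/3 := by
    have := Metric.mem_ball.mp hgball
    rw [dist_eq_norm] at this
    calc ‖(g : Y →ᵇ ℂ) - f‖ = ‖((g - fA : PY Y) : Y →ᵇ ℂ)‖ := by push_cast; ring_nf; rfl
    _ = ‖g - fA‖ := rfl
    _ < δ/3 := this
  have hgy : ∀ y : Y, ‖(g : Y →ᵇ ℂ) y - f y‖ < δ/3 := by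
    intro y
    calc ‖(g : Y →ᵇ ℂ) y - f y‖ = ‖((g : Y →ᵇ ℂ) - f) y‖ := by simp
    _ ≤ ‖(g : Y →ᵇ ℂ) - f‖ := BoundedContinuousFunction.norm_coe_le_norm _ y
    _ < δ/3 := hdist
  have hglow : ∀ y : Y, 2*δ/3 ≤ ‖(g : Y →ᵇ ℂ) y‖ := by
    intro y
    have h1 : δ ≤ ‖f y‖ := by rw [hfy y]; exact hδle y y.2
    have h2 := hgy y
    have h3 : ‖f y‖ - ‖(g : Y →ᵇ ℂ) y‖ ≤ ‖f y - (g : Y →ᵇ ℂ) y‖ := norm_sub_norm_le _ _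
    rw [norm_sub_rev] at h2
    linarith
  -- the inverse of g
  set hl : PY Y := ↑hgu.unit⁻¹ with hldef
  have hmul : g * hl = 1 := hgu.mul_val_inv
  have hmulfun : ∀ y : Y, (g : Y →ᵇ ℂ) y * (hl : Y →ᵇ ℂ) y = 1 := by
    intro y
    have : ((g * hl : PY Y) : Y →ᵇ ℂ) y = ((1 : PY Y) : Y →ᵇ ℂ) y := by rw [hmul]
    simpa using this
  have hlbdd : ∀ y : Y, ‖(hl : Y →ᵇ ℂ) y‖ ≤ 3/(2*δ) := by
    intro y
    have h1 := hmulfun y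
    have h2 := hglow y
    have hgne : (g : Y →ᵇ ℂ) y ≠ 0 := by
      intro h0; rw [h0, zero_mul] at h1; exact one_ne_zero h1.symm
    have h3 : ‖(g : Y →ᵇ ℂ) y‖ * ‖(hl : Y →ᵇ ℂ) y‖ = 1 := by
      rw [← norm_mul, h1, norm_one]
    have hgpos : (0:ℝ) < ‖(g : Y →ᵇ ℂ) y‖ := norm_pos_iff.mpr hgne
    have heq : ‖(hl : Y →ᵇ ℂ) y‖ = 1 / ‖(g : Y →ᵇ ℂ) y‖ := by
      rw [eq_div_iff hgpos.ne']
      linear_combination h3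
    rw [heq, div_le_div_iff₀ hgpos (by positivity)]
    linarith
  -- key estimate: ‖1 - hl y * f y‖ ≤ 1/2
  have hkey : ∀ y : Y, ‖1 - (hl : Y →ᵇ ℂ) y * f y‖ ≤ 1/2 := by
    intro y
    have h1 : 1 - (hl : Y →ᵇ ℂ) y * f y = (hl : Y →ᵇ ℂ) y * ((g : Y →ᵇ ℂ) y - f y) := by
      rw [mul_sub, mul_comm ((hl : Y →ᵇ ℂ) y) ((g : Y →ᵇ ℂ) y), hmulfun y]
    rw [h1, norm_mul]
    have h2 := hlbdd y
    have h3 := (hgy y).le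
    calc ‖(hl : Y →ᵇ ℂ) y‖ * ‖(g : Y →ᵇ ℂ) y - f y‖ ≤ (3/(2*δ)) * (δ/3) := by
          apply mul_le_mul h2 h3 (norm_nonneg _) (by positivity)
    _ = 1/2 := by field_simp
  -- approximate hl by a polynomial restriction
  have hlmem : (hl : Y →ᵇ ℂ) ∈ closure (polySub Y : Set (Y →ᵇ ℂ)) := hl.2
  set ε' : ℝ := 1/(4*(‖f‖+1)) with hε'def
  have hε'pos : 0 < ε' := by positivity
  obtain ⟨b, hbmem, hbdist⟩ := Metric.mem_closure_iff.mp hlmem ε' hε'pos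
  obtain ⟨r, hr⟩ := hbmem
  have hbclose : ∀ y : Y, ‖(hl : Y →ᵇ ℂ) y - b y‖ ≤ ε' := by
    intro y
    calc ‖(hl : Y →ᵇ ℂ) y - b y‖ = ‖((hl : Y →ᵇ ℂ) - b) y‖ := by simp
    _ ≤ ‖(hl : Y →ᵇ ℂ) - b‖ := BoundedContinuousFunction.norm_coe_le_norm _ y
    _ = dist (hl : Y →ᵇ ℂ) b := (dist_eq_norm _ _).symm
    _ ≤ ε' := hbdist.le
  -- the final polynomial estimate
  have hfinal : ∀ y ∈ Y, ‖pev (1 - r * q) y‖ ≤ 3/4 := by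
    intro y hy
    set yc : Y := ⟨y, hy⟩ with hyc
    have hev : pev (1 - r * q) y = (1 - (hl : Y →ᵇ ℂ) yc * f yc) +
        ((hl : Y →ᵇ ℂ) yc - b yc) * f yc := by
      have h1 : f yc = pev q y := hfy yc
      have h2 : b yc = pev r y := hr yc
      rw [h1, h2]
      simp only [pev, map_sub, map_mul, map_one]
      ring
    rw [hev]
    have h1 := hkey yc
    have h2 := hbclose yc
    have h3 : ‖f yc‖ ≤ ‖f‖ := BoundedContinuousFunction.norm_coe_le_norm f yc
    have h4 : ‖((hl : Y →ᵇ ℂ) yc - b yc) * f yc‖ ≤ ε' * ‖f‖ := by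
      rw [norm_mul]
      exact mul_le_mul h2 h3 (norm_nonneg _) hε'pos.le
    have h5 : ε' * ‖f‖ ≤ 1/4 := by
      rw [hε'def]
      rw [div_mul_eq_mul_div, one_mul, div_le_div_iff₀ (by positivity) (by norm_num)]
      nlinarith [norm_nonneg f]
    calc ‖(1 - (hl : Y →ᵇ ℂ) yc * f yc) + ((hl : Y →ᵇ ℂ) yc - b yc) * f yc‖
        ≤ ‖1 - (hl : Y →ᵇ ℂ) yc * f yc‖ + ‖((hl : Y →ᵇ ℂ) yc - b yc) * f yc‖ := norm_add_le _ _
    _ ≤ 1/2 + 1/4 := add_le_add h1 (h4.trans h5)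
    _ = 3/4 := by norm_num
  have := hz (1 - r * q) (3/4) hfinal
  have hev : pev (1 - r * q) z = 1 := by
    simp only [pev] at hq ⊢
    simp only [map_sub, map_mul, map_one, hq, mul_zero, sub_zero]
  rw [hev] at this
  simp at this
  norm_num at this
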